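/- Let G = (X, Y, E) be a Y-convex bipartite graph with Y = {y_1 < ⋯ < y_m} that admits a red dominating set, with X in lex-convex ordering. Call a finite strictly increasing sequence u_1 < u_2 < ⋯ < u_k of X a valid chain if left(u_1) = y_1, right(u_k) = y_m, and left(u_i) < left(u_{i+1}) ≤ right(u_i) + 1 ≤ right(u_{i+1}) for each i = 1, …, k−1. Let k* be the minimum length of a valid chain. Then a set D ⊆ X is a minimum cardinality red dominating set of G if and only if |D| = k* and the increasing enumeration of D is a valid chain. -/

import Mathlib

/-- A valid chain in the `Y`-convex bipartite graph with `X = Fin n`, `Y = Fin (m+1)`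
and interval neighbourhoods `[l x, r x]`: a nonempty strictly increasing list
`u_1 < ⋯ < u_k` of vertices of `X` with `left(u_1) = y_1`, `right(u_k) = y_m`, and
`left(u_i) < left(u_{i+1}) ≤ right(u_i) + 1 ≤ right(u_{i+1})` for all `i`. -/
def ValidChain {n m : ℕ} (l r : Fin n → Fin (m + 1)) (L : List (Fin n)) : Prop :=
  ∃ hne : L ≠ [],
    L.Chain' (· < ·) ∧
    l (L.head hne) = 0 ∧
    r (L.getLast hne) = Fin.last m ∧
    L.Chain' fun a b =>
      l a < l b ∧ (l b : ℕ) ≤ (r a : ℕ) + 1 ∧ (r a : ℕ) + 1 ≤ (r b : ℕ)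

section Aux

variable {n m : ℕ} (l r : Fin n → Fin (m + 1))

/-- The chain condition. -/
def Cond (a b : Fin n) : Prop :=
  l a < l b ∧ (l b : ℕ) ≤ (r a : ℕ) + 1 ∧ (r a : ℕ) + 1 ≤ (r b : ℕ)

lemma cover_aux : ∀ (L : List (Fin n)) (hne : L ≠ []),
    L.Chain' (Cond l r) →
    ∀ y : Fin (m + 1), l (L.head hne) ≤ y → y ≤ r (L.getLast hne) →
      ∃ x ∈ L, l x ≤ y ∧ y ≤ r x
  | [], hne, _, _, _, _ => absurd rfl hne
  | [a], _, _, y, h1, h2 => ⟨a, by simp, h1, by simpa using h2⟩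
  | a :: b :: t, _, hc, y, h1, h2 => by
    rcases le_or_gt y (r a) with h | h
    · exact ⟨a, by simp, h1, h⟩
    · obtain ⟨hab, hc'⟩ := List.isChain_cons_cons.mp hc
      have hby : l b ≤ y := by
        have h1 := hab.2.1
        have h2 : (r a : ℕ) < (y : ℕ) := h
        exact Fin.le_def.mpr (by omega)
      have hlast : (a :: b :: t).getLast (by simp) = (b :: t).getLast (by simp) :=
        List.getLast_cons (by simp)
      obtain ⟨x, hx, hx2⟩ := cover_aux (b :: t) (by simp) hc' y hby (hlast ▸ h2)
      exact ⟨x, by simp [List.mem_cons] at hx ⊢; tauto, hx2⟩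

variable {l r} in
lemma lt_of_cond (hlex : ∀ i j : Fin n, i < j → l i < l j ∨ (l i = l j ∧ r i ≤ r j))
    {a b : Fin n} (h : Cond l r a b) : a < b := by
  rcases lt_trichotomy a b with h' | h' | h'
  · exact h'
  · exact absurd (h' ▸ h.1) (lt_irrefl _)
  · rcases hlex b a h' with hh | hh
    · exact absurd (hh.trans h.1) (lt_irrefl _)
    · exact absurd (hh.1 ▸ h.1) (lt_irrefl _)

variable {l r} in
/-- Greedy growth of a chain from a dominating set. -/
lemma grow {D : Finset (Fin n)} (hD : ∀ y : Fin (m + 1), ∃ x ∈ D, l x ≤ y ∧ y ≤ r x) :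
    ∀ k : ℕ, ∀ a : Fin n, a ∈ D → m - (r a : ℕ) ≤ k →
      (∀ x ∈ D, l x ≤ l a → r x ≤ r a) →
      ∃ L : List (Fin n), ∃ hne : L ≠ [], L.head hne = a ∧
        (∀ x ∈ L, x ∈ D) ∧ L.Chain' (Cond l r) ∧ r (L.getLast hne) = Fin.last m := by
  intro k
  induction k with
  | zero =>
    intro a ha hk _
    have hra : (r a : ℕ) = m := by have := (r a).isLt; omega
    exact ⟨[a], by simp, rfl, by simp [ha], by simp [List.Chain'],
      by simp [Fin.ext_iff, hra, Fin.last]⟩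
  | succ k ih =>
    intro a ha hk hinv
    by_cases hra : (r a : ℕ) = m
    · exact ⟨[a], by simp, rfl, by simp [ha], by simp [List.Chain'],
        by simp [Fin.ext_iff, hra, Fin.last]⟩
    · have hra' : (r a : ℕ) < m := by have := (r a).isLt; omega
      set y : Fin (m + 1) := ⟨(r a : ℕ) + 1, by omega⟩ with hy
      have hcand : (D.filter (fun x => l x ≤ y ∧ y ≤ r x)).Nonempty := by
        obtain ⟨x, hx, hx2⟩ := hD y
        exact ⟨x, Finset.mem_filter.mpr ⟨hx, hx2⟩⟩
      obtain ⟨b, hb, hbmax⟩ := Finset.exists_max_image _ r hcand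
      simp only [Finset.mem_filter] at hb
      obtain ⟨hbD, hbl, hbr⟩ := hb
      have hbrn : (r a : ℕ) + 1 ≤ (r b : ℕ) := hbr
      have hbln : (l b : ℕ) ≤ (r a : ℕ) + 1 := hbl
      have hlab : l a < l b := by
        by_contra hcon
        push_neg at hcon
        have h3 : (r b : ℕ) ≤ (r a : ℕ) := Fin.le_def.mp (hinv b hbD hcon)
        omega
      have hcond : Cond l r a b := ⟨hlab, hbln, hbrn⟩
      have hinvb : ∀ x ∈ D, l x ≤ l b → r x ≤ r b := by
        intro x hx hxl
        rcases le_or_gt ((r a : ℕ) + 1) (r x : ℕ) with hh | hh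
        · exact hbmax x (Finset.mem_filter.mpr ⟨hx, le_trans hxl hbl, hh⟩)
        · exact Fin.le_def.mpr (by omega)
      obtain ⟨L', hne', hhead', hsub', hchain', hlast'⟩ :=
        ih b hbD (by omega) hinvb
      refine ⟨a :: L', by simp, rfl, ?_, ?_, ?_⟩
      · intro x hx
        rcases List.mem_cons.mp hx with h | h
        · exact h ▸ ha
        · exact hsub' x h
      · refine List.isChain_cons.mpr ⟨?_, hchain'⟩
        intro z hz
        have : z = b := by
          have := List.head?_eq_head hne'
          rw [this, hhead'] at hz
          exact (Option.mem_some_iff.mp hz).symm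
        exact this ▸ hcond
      · rwa [List.getLast_cons hne']

variable {l r} in
/-- Any dominating set contains the elements of a valid chain. -/
lemma exists_chain_subset
    (hlex : ∀ i j : Fin n, i < j → l i < l j ∨ (l i = l j ∧ r i ≤ r j))
    {D : Finset (Fin n)} (hD : ∀ y : Fin (m + 1), ∃ x ∈ D, l x ≤ y ∧ y ≤ r x) :
    ∃ L : List (Fin n), ValidChain l r L ∧ (∀ x ∈ L, x ∈ D) := by
  -- start: a vertex with l = 0, maximal r
  have h0 : (D.filter (fun x => l x = 0)).Nonempty := by
    obtain ⟨x, hx, hx2⟩ := hD 0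
    exact ⟨x, Finset.mem_filter.mpr ⟨hx, le_antisymm hx2.1 (Fin.zero_le _)⟩⟩
  obtain ⟨a, ha, hamax⟩ := Finset.exists_max_image _ r h0
  obtain ⟨haD, hal⟩ := Finset.mem_filter.mp ha
  have hinv : ∀ x ∈ D, l x ≤ l a → r x ≤ r a := by
    intro x hx hxl
    refine hamax x (Finset.mem_filter.mpr ⟨hx, ?_⟩)
    rw [hal] at hxl
    exact le_antisymm hxl (Fin.zero_le _)
  obtain ⟨L, hne, hhead, hsub, hchain, hlast⟩ :=
    grow hD (m - (r a : ℕ)) a haD le_rfl hinv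
  refine ⟨L, ⟨hne, ?_, hhead ▸ hal, hlast, hchain⟩, hsub⟩
  exact List.IsChain.imp (fun _ _ h => lt_of_cond hlex h) hchain

variable {l r} in
/-- A valid chain's elements dominate everything. -/
lemma chain_dominates {L : List (Fin n)} (hL : ValidChain l r L) :
    ∀ y : Fin (m + 1), ∃ x ∈ L, l x ≤ y ∧ y ≤ r x := by
  obtain ⟨hne, _, hhead, hlast, hchain⟩ := hL
  intro y
  exact cover_aux l r L hne hchain y (hhead ▸ Fin.zero_le y) (hlast ▸ Fin.le_last y)

variable {l r} in
lemma chain_nodup (hlex : ∀ i j : Fin n, i < j → l i < l j ∨ (l i = l j ∧ r i ≤ r j))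
    {L : List (Fin n)} (hL : ValidChain l r L) : L.Nodup := by
  obtain ⟨hne, hlt, _, _, _⟩ := hL
  have := List.isChain_iff_pairwise.mp hlt
  exact this.imp fun h => ne_of_lt h

end Aux

/-- Let `G` be a `Y`-convex bipartite graph (`X = Fin n`, `Y = Fin (m+1)`, interval
neighbourhoods `[l x, r x]`) admitting a red dominating set, with `X` in lex-convex
ordering, and let `k*` be the minimum length of a valid chain.  Then `D ⊆ X` is a
minimum cardinality red dominating set of `G` iff `|D| = k*` and the increasing
enumeration of `D` is a valid chain. -/
theorem stmt10 {n m : ℕ} (l r : Fin n → Fin (m + 1)) (hlr : ∀ x, l x ≤ r x)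
    (hlex : ∀ i j : Fin n, i < j → l i < l j ∨ (l i = l j ∧ r i ≤ r j))
    (hdom : ∃ D : Finset (Fin n), ∀ y : Fin (m + 1), ∃ x ∈ D, l x ≤ y ∧ y ≤ r x)
    (kstar : ℕ)
    (hks : IsLeast {j : ℕ | ∃ L : List (Fin n), ValidChain l r L ∧ L.length = j} kstar) :
    ∀ D : Finset (Fin n),
      ((∀ y : Fin (m + 1), ∃ x ∈ D, l x ≤ y ∧ y ≤ r x) ∧
        ∀ D' : Finset (Fin n),
          (∀ y : Fin (m + 1), ∃ x ∈ D', l x ≤ y ∧ y ≤ r x) → D.card ≤ D'.card) ↔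
      (D.card = kstar ∧ ValidChain l r (D.sort (· ≤ ·))) := by
  -- minimal chain L* and its dominating set
  obtain ⟨Ls, hLs, hLslen⟩ := hks.1
  have hLsnd := chain_nodup hlex hLs
  have hLsdom : ∀ y : Fin (m + 1), ∃ x ∈ Ls.toFinset, l x ≤ y ∧ y ≤ r x := by
    intro y
    obtain ⟨x, hx, h⟩ := chain_dominates hLs y
    exact ⟨x, List.mem_toFinset.mpr hx, h⟩
  have hLscard : Ls.toFinset.card = kstar := by
    rw [List.toFinset_card_of_nodup hLsnd, hLslen]
  -- lower bound: any dominating set has card ≥ kstar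
  have hlb : ∀ D' : Finset (Fin n),
      (∀ y : Fin (m + 1), ∃ x ∈ D', l x ≤ y ∧ y ≤ r x) → kstar ≤ D'.card := by
    intro D' hD'
    obtain ⟨L, hL, hsub⟩ := exists_chain_subset hlex hD'
    have hnd := chain_nodup hlex hL
    have h1 : L.toFinset ⊆ D' := fun x hx => hsub x (List.mem_toFinset.mp hx)
    calc kstar ≤ L.length := hks.2 ⟨L, hL, rfl⟩
      _ = L.toFinset.card := (List.toFinset_card_of_nodup hnd).symm
      _ ≤ D'.card := Finset.card_le_card h1
  intro D
  constructor
  · rintro ⟨hDdom, hDmin⟩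
    have hcard : D.card = kstar :=
      le_antisymm (hLscard ▸ hDmin _ hLsdom) (hlb D hDdom)
    obtain ⟨L, hL, hsub⟩ := exists_chain_subset hlex hDdom
    have hnd := chain_nodup hlex hL
    have h1 : L.toFinset ⊆ D := fun x hx => hsub x (List.mem_toFinset.mp hx)
    have h2 : D.card ≤ L.toFinset.card := by
      refine hDmin _ ?_
      intro y
      obtain ⟨x, hx, h⟩ := chain_dominates hL y
      exact ⟨x, List.mem_toFinset.mpr hx, h⟩
    have heq : L.toFinset = D := Finset.eq_of_subset_of_card_le h1 h2
    have hsorteq : D.sort (· ≤ ·) = L := by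
      refine (fun hp hs => List.Perm.eq_of_pairwise' (D.pairwise_sort _) hs hp) ?_ ?_
      · refine List.perm_of_nodup_nodup_toFinset_eq (D.sort_nodup _) hnd ?_
        rw [heq, Finset.sort_toFinset]
      · obtain ⟨_, hlt, _, _, _⟩ := hL
        exact (List.isChain_iff_pairwise.mp hlt).imp fun h => le_of_lt h -- ok?
    exact ⟨hcard, hsorteq ▸ hL⟩
  · rintro ⟨hcard, hVC⟩
    have hDdom : ∀ y : Fin (m + 1), ∃ x ∈ D, l x ≤ y ∧ y ≤ r x := by
      intro y
      obtain ⟨x, hx, h⟩ := chain_dominates hVC y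
      exact ⟨x, (Finset.mem_sort _).mp hx, h⟩
    exact ⟨hDdom, fun D' hD' => hcard ▸ hlb D' hD'⟩
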